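/- Fix a real number ν ≥ 1 and a positive natural number k. For a sequence a : ℕ → ℂ define the weighted norm ‖a‖_ν := |a(0)| + 2·Σ_{β ≥ 1} |a(β)|·ν^β, and for a, b : ℕ → ℂ define the Chebyshev convolution (a * b)(β) := Σ_{γ ∈ ℤ} a(|β − γ|)·b(|γ|), the sum ranging over all integers γ. For A, B : (Fin k → ℕ) → (ℕ → ℂ) with ‖A‖ := Σ_{α} ‖A(α)‖_ν < ∞ and ‖B‖ := Σ_{α} ‖B(α)‖_ν < ∞ (sums over all multi-indices α ∈ ℕ^k), define the Taylor–Chebyshev convolution (A ⊛ B)(α) := Σ_{β ≤ α} A(α − β) * B(β), the finite sum ranging over multi-indices β with β(i) ≤ α(i) for all i. Then Σ_{α} ‖(A ⊛ B)(α)‖_ν ≤ ‖A‖·‖B‖. -/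

import Mathlib

open scoped ENNReal NNReal


/-- The weighted `ℓ¹_ν` norm of a Chebyshev coefficient sequence:
`‖a‖_ν = |a 0| + 2 Σ_{β ≥ 1} |a β| ν^β`. -/
noncomputable def chebNorm (ν : ℝ) (a : ℕ → ℂ) : ℝ :=
  ‖a 0‖ + 2 * ∑' β : ℕ, ‖a (β + 1)‖ * ν ^ (β + 1)

/-- The discrete Chebyshev convolution
`(a * b)(β) = Σ_{γ ∈ ℤ} a(|β − γ|) b(|γ|)`. -/
noncomputable def chebConv (a b : ℕ → ℂ) : ℕ → ℂ :=
  fun β => ∑' γ : ℤ, a ((β - γ : ℤ).natAbs) * b γ.natAbs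

/-- The Taylor–Chebyshev convolution: Cauchy product over multi-indices
combined with the Chebyshev convolution of the coefficient sequences. -/
noncomputable def taylorChebConv {k : ℕ} (A B : (Fin k → ℕ) → ℕ → ℂ) :
    (Fin k → ℕ) → ℕ → ℂ :=
  fun α => ∑ β ∈ Finset.Iic α, chebConv (A (α - β)) (B β)

namespace TCCAux

lemma zsplit (g : ℕ → ℝ≥0∞) :
    ∑' γ : ℤ, g γ.natAbs = g 0 + 2 * ∑' n : ℕ, g (n + 1) := by
  have h := tsum_of_nat_of_neg_add_one (f := fun γ : ℤ => g γ.natAbs)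
    ENNReal.summable ENNReal.summable
  have h1 : (fun n : ℕ => g ((n : ℤ)).natAbs) = fun n : ℕ => g n := by
    funext n; simp
  have h2 : (fun n : ℕ => g ((-(n + 1) : ℤ)).natAbs) = fun n : ℕ => g (n + 1) := by
    funext n; rw [show ((-(n + 1) : ℤ)).natAbs = n + 1 by omega]
  rw [h1, h2] at h
  rw [h, tsum_eq_zero_add' ENNReal.summable, two_mul]
  ring

lemma zconv (u v : ℤ → ℝ≥0∞) :
    ∑' β : ℤ, ∑' γ : ℤ, u (β - γ) * v γ = (∑' δ : ℤ, u δ) * ∑' γ : ℤ, v γ := by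
  rw [ENNReal.tsum_comm]
  calc ∑' γ : ℤ, ∑' β : ℤ, u (β - γ) * v γ
      = ∑' γ : ℤ, (∑' β : ℤ, u (β - γ)) * v γ := by
        congr 1; funext γ; rw [ENNReal.tsum_mul_right]
    _ = ∑' γ : ℤ, (∑' δ : ℤ, u δ) * v γ := by
        congr 1; funext γ; congr 1
        exact (Equiv.subRight γ).tsum_eq u
    _ = (∑' δ : ℤ, u δ) * ∑' γ : ℤ, v γ := ENNReal.tsum_mul_left

open Classical in
lemma natk_cauchy {k : ℕ} (U V : (Fin k → ℕ) → ℝ≥0∞) :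
    ∑' α : Fin k → ℕ, ∑ β ∈ Finset.Iic α, U (α - β) * V β
      = (∑' α, U α) * ∑' α, V α := by
  have hst : ∀ α : Fin k → ℕ, ∑ β ∈ Finset.Iic α, U (α - β) * V β
      = ∑' β : Fin k → ℕ, (if β ≤ α then U (α - β) * V β else 0) := by
    intro α
    rw [tsum_eq_sum (s := Finset.Iic α)
      (by intro b hb; simp only [Finset.mem_Iic] at hb; simp [hb])]
    refine Finset.sum_congr rfl fun b hb => ?_
    simp only [Finset.mem_Iic] at hb; simp [hb]
  simp_rw [hst]
  rw [ENNReal.tsum_comm]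
  calc ∑' (β : Fin k → ℕ) (α : Fin k → ℕ), (if β ≤ α then U (α - β) * V β else 0)
      = ∑' β : Fin k → ℕ, (∑' δ : Fin k → ℕ, U δ) * V β := by
        congr 1; funext β
        have hinj : Function.Injective (fun δ : Fin k → ℕ => δ + β) :=
          add_left_injective β
        have hsupp : Function.support
            (fun α : Fin k → ℕ => if β ≤ α then U (α - β) * V β else 0)
            ⊆ Set.range (fun δ : Fin k → ℕ => δ + β) := by
          intro α hα
          by_cases h : β ≤ α
          · exact ⟨α - β, tsub_add_cancel_of_le h⟩
          · simp [Function.mem_support, if_neg h] at hα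
        rw [← hinj.tsum_eq hsupp]
        have : ∀ δ : Fin k → ℕ,
            (if β ≤ δ + β then U (δ + β - β) * V β else 0) = U δ * V β := by
          intro δ
          rw [if_pos le_add_self, add_tsub_cancel_right]
        simp only [this]
        rw [ENNReal.tsum_mul_right]
    _ = (∑' α, U α) * ∑' α, V α := by
        rw [ENNReal.tsum_mul_left, mul_comm]


lemma chebNorm_nonneg {ν : ℝ} (hν : 0 ≤ ν) (a : ℕ → ℂ) : 0 ≤ chebNorm ν a := by
  have : 0 ≤ ∑' β : ℕ, ‖a (β + 1)‖ * ν ^ (β + 1) :=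
    tsum_nonneg fun β => mul_nonneg (norm_nonneg _) (pow_nonneg hν _)
  unfold chebNorm
  positivity

lemma summable_iff_ofReal_ne_top {f : ℕ → ℝ} (hf : ∀ x, 0 ≤ f x) :
    Summable f ↔ ∑' x, ENNReal.ofReal (f x) ≠ ⊤ := by
  have hco : (fun x => ENNReal.ofReal (f x)) = fun x => ((f x).toNNReal : ℝ≥0∞) := rfl
  rw [hco, ENNReal.tsum_coe_ne_top_iff_summable]
  constructor
  · intro h
    rw [← NNReal.summable_coe]
    refine h.congr fun x => ?_
    exact (Real.coe_toNNReal _ (hf x)).symm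
  · intro h
    rw [← NNReal.summable_coe] at h
    refine h.congr fun x => Real.coe_toNNReal _ (hf x)

lemma ofReal_norm_mul_pow {ν : ℝ} (hν : 0 ≤ ν) (z : ℂ) (m : ℕ) :
    ENNReal.ofReal (‖z‖ * ν ^ m) = (‖z‖₊ : ℝ≥0∞) * ENNReal.ofReal ν ^ m := by
  rw [ENNReal.ofReal_mul (norm_nonneg _), ofReal_norm, enorm_eq_nnnorm,
    ENNReal.ofReal_pow hν]

lemma cheb_eq {ν : ℝ} (hν : 0 ≤ ν) (a : ℕ → ℂ)
    (ha : Summable fun β : ℕ => ‖a β‖ * ν ^ β) :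
    ∑' γ : ℤ, (‖a γ.natAbs‖₊ : ℝ≥0∞) * ENNReal.ofReal ν ^ γ.natAbs
      = ENNReal.ofReal (chebNorm ν a) := by
  have hshift : Summable fun β : ℕ => ‖a (β + 1)‖ * ν ^ (β + 1) :=
    ha.comp_injective (add_left_injective 1)
  rw [zsplit (fun m => (‖a m‖₊ : ℝ≥0∞) * ENNReal.ofReal ν ^ m)]
  unfold chebNorm
  rw [ENNReal.ofReal_add (norm_nonneg _)
      (mul_nonneg (by norm_num) (tsum_nonneg fun β => mul_nonneg (norm_nonneg _) (pow_nonneg hν _))),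
    ENNReal.ofReal_mul (by norm_num : (0:ℝ) ≤ 2),
    ENNReal.ofReal_tsum_of_nonneg
      (fun n => mul_nonneg (norm_nonneg _) (pow_nonneg hν _)) hshift]
  simp only [ofReal_norm_mul_pow hν]
  rw [ofReal_norm, enorm_eq_nnnorm, pow_zero, mul_one]
  norm_num

lemma chebConv_shift (a b : ℕ → ℂ) (β : ℤ) :
    chebConv a b β.natAbs = ∑' γ : ℤ, a ((β - γ).natAbs) * b γ.natAbs := by
  rcases le_or_gt 0 β with hβ | hβ
  · have : ((β.natAbs : ℤ)) = β := Int.natAbs_of_nonneg hβ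
    unfold chebConv
    rw [this]
  · unfold chebConv
    rw [← (Equiv.neg ℤ).tsum_eq (fun γ : ℤ => a ((β - γ).natAbs) * b γ.natAbs)]
    congr 1
    funext γ
    simp only [Equiv.neg_apply]
    congr 2
    · omega
    · omega

lemma ennnorm_tsum_le (f : ℤ → ℂ) :
    (‖∑' γ, f γ‖₊ : ℝ≥0∞) ≤ ∑' γ, (‖f γ‖₊ : ℝ≥0∞) := by
  by_cases hs : Summable fun γ => ‖f γ‖
  · have h1 : ‖∑' γ, f γ‖ ≤ ∑' γ, ‖f γ‖ := norm_tsum_le_tsum_norm hs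
    calc (‖∑' γ, f γ‖₊ : ℝ≥0∞) = ENNReal.ofReal ‖∑' γ, f γ‖ :=
          (ofReal_norm _).symm
      _ ≤ ENNReal.ofReal (∑' γ, ‖f γ‖) := ENNReal.ofReal_le_ofReal h1
      _ = ∑' γ, ENNReal.ofReal ‖f γ‖ :=
          ENNReal.ofReal_tsum_of_nonneg (fun γ => norm_nonneg _) hs
      _ = ∑' γ, (‖f γ‖₊ : ℝ≥0∞) := by
          simp only [ofReal_norm, enorm_eq_nnnorm]
  · have : ¬ Summable f := fun h => hs (summable_norm_iff.2 h)
    rw [tsum_eq_zero_of_not_summable this]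
    simp

lemma natAbs_triangle (β γ : ℤ) : β.natAbs ≤ (β - γ).natAbs + γ.natAbs := by omega

lemma conv_bound {ν : ℝ} (hν : 1 ≤ ν) (a b : ℕ → ℂ) (β : ℤ) :
    (‖chebConv a b β.natAbs‖₊ : ℝ≥0∞) * ENNReal.ofReal ν ^ β.natAbs
      ≤ ∑' γ : ℤ, ((‖a ((β - γ).natAbs)‖₊ : ℝ≥0∞) * ENNReal.ofReal ν ^ (β - γ).natAbs)
          * ((‖b γ.natAbs‖₊ : ℝ≥0∞) * ENNReal.ofReal ν ^ γ.natAbs) := by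
  set oν := ENNReal.ofReal ν with hoν
  have h1 : (1 : ℝ≥0∞) ≤ oν := by
    rw [hoν]; exact ENNReal.one_le_ofReal.2 hν
  rw [chebConv_shift]
  calc (‖∑' γ : ℤ, a ((β - γ).natAbs) * b γ.natAbs‖₊ : ℝ≥0∞) * oν ^ β.natAbs
      ≤ (∑' γ : ℤ, (‖a ((β - γ).natAbs) * b γ.natAbs‖₊ : ℝ≥0∞)) * oν ^ β.natAbs := by
        exact mul_le_mul_left (ennnorm_tsum_le _) _
    _ = ∑' γ : ℤ, (‖a ((β - γ).natAbs)‖₊ : ℝ≥0∞) * (‖b γ.natAbs‖₊ : ℝ≥0∞) * oν ^ β.natAbs := by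
        rw [← ENNReal.tsum_mul_right]
        congr 1; funext γ
        rw [nnnorm_mul, ENNReal.coe_mul]
    _ ≤ ∑' γ : ℤ, ((‖a ((β - γ).natAbs)‖₊ : ℝ≥0∞) * oν ^ (β - γ).natAbs)
          * ((‖b γ.natAbs‖₊ : ℝ≥0∞) * oν ^ γ.natAbs) := by
        refine ENNReal.tsum_le_tsum fun γ => ?_
        have hpow : oν ^ β.natAbs ≤ oν ^ ((β - γ).natAbs + γ.natAbs) :=
          pow_le_pow_right₀ h1 (natAbs_triangle β γ)
        calc (‖a ((β - γ).natAbs)‖₊ : ℝ≥0∞) * (‖b γ.natAbs‖₊ : ℝ≥0∞) * oν ^ β.natAbs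
            ≤ (‖a ((β - γ).natAbs)‖₊ : ℝ≥0∞) * (‖b γ.natAbs‖₊ : ℝ≥0∞)
                * oν ^ ((β - γ).natAbs + γ.natAbs) := by
              exact mul_le_mul_right hpow _
          _ = ((‖a ((β - γ).natAbs)‖₊ : ℝ≥0∞) * oν ^ (β - γ).natAbs)
                * ((‖b γ.natAbs‖₊ : ℝ≥0∞) * oν ^ γ.natAbs) := by
              rw [pow_add]; ring



end TCCAux

/-- Banach algebra property of `ℓ¹(ℓ¹_ν)` under the
Taylor–Chebyshev convolution `⊛`:
`Σ_α ‖(A ⊛ B)(α)‖_ν ≤ (Σ_α ‖A(α)‖_ν) (Σ_α ‖B(α)‖_ν)`. -/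

theorem taylorChebConv_norm_le
    (ν : ℝ) (hν : 1 ≤ ν) (k : ℕ) (hk : 0 < k)
    (A B : (Fin k → ℕ) → ℕ → ℂ)
    (hAν : ∀ α : Fin k → ℕ, Summable fun β : ℕ => ‖A α β‖ * ν ^ β)
    (hBν : ∀ α : Fin k → ℕ, Summable fun β : ℕ => ‖B α β‖ * ν ^ β)
    (hA : Summable fun α : Fin k → ℕ => chebNorm ν (A α))
    (hB : Summable fun α : Fin k → ℕ => chebNorm ν (B α)) :
    (∀ α : Fin k → ℕ, Summable fun β : ℕ => ‖taylorChebConv A B α β‖ * ν ^ β) ∧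
    (Summable fun α : Fin k → ℕ => chebNorm ν (taylorChebConv A B α)) ∧
    (∑' α : Fin k → ℕ, chebNorm ν (taylorChebConv A B α))
      ≤ (∑' α : Fin k → ℕ, chebNorm ν (A α)) * ∑' α : Fin k → ℕ, chebNorm ν (B α) := by
  classical
  have hν0 : (0:ℝ) ≤ ν := le_trans zero_le_one hν
  set oν := ENNReal.ofReal ν with hoν
  set g : (ℕ → ℂ) → ℤ → ℝ≥0∞ :=
    fun a γ => (‖a γ.natAbs‖₊ : ℝ≥0∞) * oν ^ γ.natAbs with hg
  set T : (ℕ → ℂ) → ℝ≥0∞ := fun a => ∑' γ : ℤ, g a γ with hT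
  set C := taylorChebConv A B with hCdef
  have hTA : ∀ α, T (A α) = ENNReal.ofReal (chebNorm ν (A α)) :=
    fun α => TCCAux.cheb_eq hν0 _ (hAν α)
  have hTB : ∀ α, T (B α) = ENNReal.ofReal (chebNorm ν (B α)) :=
    fun α => TCCAux.cheb_eq hν0 _ (hBν α)
  have hSA : ∑' α, T (A α) = ENNReal.ofReal (∑' α, chebNorm ν (A α)) := by
    rw [ENNReal.ofReal_tsum_of_nonneg (fun α => TCCAux.chebNorm_nonneg hν0 _) hA]
    exact tsum_congr hTA
  have hSB : ∑' α, T (B α) = ENNReal.ofReal (∑' α, chebNorm ν (B α)) := by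
    rw [ENNReal.ofReal_tsum_of_nonneg (fun α => TCCAux.chebNorm_nonneg hν0 _) hB]
    exact tsum_congr hTB
  -- the key bound, entirely in `ℝ≥0∞`
  have key : ∑' α, T (C α) ≤ (∑' α, T (A α)) * ∑' α, T (B α) := by
    have h1 : ∀ α, T (C α) ≤ ∑ β' ∈ Finset.Iic α, T (A (α - β')) * T (B β') := by
      intro α
      have hpt : ∀ β : ℤ, g (C α) β
          ≤ ∑ β' ∈ Finset.Iic α, ∑' γ : ℤ, g (A (α - β')) (β - γ) * g (B β') γ := by
        intro β
        have hstep1 : g (C α) β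
            ≤ ∑ β' ∈ Finset.Iic α,
                (‖chebConv (A (α - β')) (B β') β.natAbs‖₊ : ℝ≥0∞) * oν ^ β.natAbs := by
          rw [hg]
          simp only [hCdef, taylorChebConv]
          rw [← Finset.sum_mul]
          refine mul_le_mul_left ?_ _
          calc (‖(∑ β' ∈ Finset.Iic α, chebConv (A (α - β')) (B β')) β.natAbs‖₊ : ℝ≥0∞)
              = (‖∑ β' ∈ Finset.Iic α, chebConv (A (α - β')) (B β') β.natAbs‖₊ : ℝ≥0∞) := by
                rw [Finset.sum_apply]
            _ ≤ ∑ β' ∈ Finset.Iic α, (‖chebConv (A (α - β')) (B β') β.natAbs‖₊ : ℝ≥0∞) := by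
                rw [← ENNReal.coe_finset_sum]
                exact ENNReal.coe_le_coe.2 (nnnorm_sum_le _ _)
        refine hstep1.trans (Finset.sum_le_sum fun β' _ => ?_)
        exact TCCAux.conv_bound hν _ _ β
      calc T (C α) ≤ ∑' β : ℤ, ∑ β' ∈ Finset.Iic α,
              ∑' γ : ℤ, g (A (α - β')) (β - γ) * g (B β') γ :=
            ENNReal.tsum_le_tsum hpt
        _ = ∑ β' ∈ Finset.Iic α, ∑' β : ℤ,
              ∑' γ : ℤ, g (A (α - β')) (β - γ) * g (B β') γ :=
            Summable.tsum_finsetSum fun _ _ => ENNReal.summable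
        _ = ∑ β' ∈ Finset.Iic α, T (A (α - β')) * T (B β') :=
            Finset.sum_congr rfl fun β' _ => TCCAux.zconv _ _
    calc ∑' α, T (C α) ≤ ∑' α, ∑ β' ∈ Finset.Iic α, T (A (α - β')) * T (B β') :=
          ENNReal.tsum_le_tsum h1
      _ = (∑' α, T (A α)) * ∑' α, T (B α) := TCCAux.natk_cauchy (fun x => T (A x)) (fun x => T (B x))
  have hRfin : (∑' α, T (A α)) * (∑' α, T (B α)) ≠ ⊤ := by
    rw [hSA, hSB]
    exact ENNReal.mul_ne_top ENNReal.ofReal_ne_top ENNReal.ofReal_ne_top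
  have hCfin : ∑' α, T (C α) ≠ ⊤ := ne_top_of_le_ne_top hRfin key
  have hCαfin : ∀ α, T (C α) ≠ ⊤ :=
    fun α => ne_top_of_le_ne_top hCfin (ENNReal.le_tsum α)
  -- summability of the coefficient sums of `C α`
  have hCν : ∀ α : Fin k → ℕ, Summable fun β : ℕ => ‖C α β‖ * ν ^ β := by
    intro α
    rw [TCCAux.summable_iff_ofReal_ne_top
      (fun β => mul_nonneg (norm_nonneg _) (pow_nonneg hν0 _))]
    refine ne_top_of_le_ne_top (hCαfin α) ?_
    calc ∑' β : ℕ, ENNReal.ofReal (‖C α β‖ * ν ^ β)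
        = ∑' β : ℕ, g (C α) (β : ℤ) := by
          refine tsum_congr fun β => ?_
          rw [hg]
          simp only [Int.natAbs_natCast]
          exact TCCAux.ofReal_norm_mul_pow hν0 _ _
      _ ≤ T (C α) := by
          refine Summable.tsum_le_tsum_of_inj (fun β : ℕ => (β : ℤ))
            (fun m n h => by simpa using h : Function.Injective fun β : ℕ => (β : ℤ)) (fun _ _ => zero_le)
            (fun β => le_refl _) ENNReal.summable ENNReal.summable
  have hTC : ∀ α, T (C α) = ENNReal.ofReal (chebNorm ν (C α)) :=
    fun α => TCCAux.cheb_eq hν0 _ (hCν α)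
  have hch : ∀ α, chebNorm ν (C α) = (T (C α)).toReal := by
    intro α
    rw [hTC α, ENNReal.toReal_ofReal (TCCAux.chebNorm_nonneg hν0 _)]
  have hCsum : Summable fun α : Fin k → ℕ => chebNorm ν (C α) := by
    refine (ENNReal.summable_toReal hCfin).congr fun α => (hch α).symm
  refine ⟨hCν, hCsum, ?_⟩
  have hfinal : ∑' α, chebNorm ν (C α) = (∑' α, T (C α)).toReal := by
    rw [ENNReal.tsum_toReal_eq hCαfin]
    exact tsum_congr hch
  rw [hfinal]
  calc (∑' α, T (C α)).toReal ≤ ((∑' α, T (A α)) * ∑' α, T (B α)).toReal :=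
        ENNReal.toReal_mono hRfin key
    _ = (∑' α : Fin k → ℕ, chebNorm ν (A α)) * ∑' α : Fin k → ℕ, chebNorm ν (B α) := by
        rw [hSA, hSB, ← ENNReal.ofReal_mul (tsum_nonneg fun α => TCCAux.chebNorm_nonneg hν0 _),
          ENNReal.toReal_ofReal]
        exact mul_nonneg (tsum_nonneg fun α => TCCAux.chebNorm_nonneg hν0 _)
          (tsum_nonneg fun α => TCCAux.chebNorm_nonneg hν0 _)
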